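/- Let n ≥ 1 be an integer and let K be a compact subset of ℝⁿ. If K × {0}, regarded as a compact subset of ℝⁿ⁺¹ = ℝⁿ × ℝ, is cellular in ℝⁿ⁺¹, then K is cell-like in ℝⁿ. -/
import Mathlib

/-- `K ⊆ X` is cellular (with cells modeled on the closed unit ball of `ℝᵐ`) if it is
the intersection of a decreasing sequence of topological `m`-cells, each contained in
the interior of the previous one. -/
def IsCellularIn (X : Type*) [TopologicalSpace X] (m : ℕ) (K : Set X) : Prop :=
  ∃ B : ℕ → Set X,
    (∀ i, Nonempty (↥(B i) ≃ₜ ↥(Metric.closedBall (0 : EuclideanSpace ℝ (Fin m)) 1))) ∧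
    (∀ i, B (i + 1) ⊆ interior (B i)) ∧ K = ⋂ i, B i

/-- `K` is cell-like if the inclusion of `K` into any open neighborhood of itself is
null-homotopic. -/
def IsCellLike {X : Type*} [TopologicalSpace X] (K : Set X) : Prop :=
  ∀ U : Set X, IsOpen U → ∀ (hKU : K ⊆ U),
    ∃ c : ↥U, ContinuousMap.Homotopic
      (⟨Set.inclusion hKU, continuous_inclusion hKU⟩ : C(↥K, ↥U))
      (ContinuousMap.const _ c)

/-- If `K × {0}` is cellular in `ℝⁿ⁺¹ = ℝⁿ × ℝ`, then `K` is cell-like in `ℝⁿ`. -/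
theorem stmt_16 (n : ℕ) (hn : 1 ≤ n) (K : Set (EuclideanSpace ℝ (Fin n)))
    (hKc : IsCompact K)
    (hcell : IsCellularIn (EuclideanSpace ℝ (Fin n) × ℝ) (n + 1) (K ×ˢ ({0} : Set ℝ))) :
    IsCellLike K := by
  obtain ⟨B, hball, hnest, hK⟩ := hcell
  have hmono : ∀ i j, i ≤ j → B j ⊆ B i := by
    intro i j hij
    induction j, hij using Nat.le_induction with
    | base => exact subset_rfl
    | succ k hk ih => exact ((hnest k).trans interior_subset).trans ih
  have hcompact : ∀ i, IsCompact (B i) := by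
    intro i
    obtain ⟨e⟩ := hball i
    have h1 : CompactSpace ↥(Metric.closedBall (0 : EuclideanSpace ℝ (Fin (n+1))) 1) :=
      isCompact_iff_compactSpace.mp (isCompact_closedBall _ _)
    have h2 := e.symm.compactSpace
    exact isCompact_iff_compactSpace.mpr h2
  intro U hU hKU
  set V : Set (EuclideanSpace ℝ (Fin n) × ℝ) := U ×ˢ (Set.univ : Set ℝ) with hV
  have hVopen : IsOpen V := hU.prod isOpen_univ
  have hKV : K ×ˢ ({0} : Set ℝ) ⊆ V := fun p hp => ⟨hKU hp.1, trivial⟩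
  obtain ⟨t, ht⟩ := (hcompact 0).elim_finite_subfamily_closed
    (fun i => B i ∩ Vᶜ)
    (fun i => ((hcompact i).isClosed).inter hVopen.isClosed_compl)
    (by
      apply Set.eq_empty_iff_forall_notMem.mpr
      rintro x ⟨hx0, hx⟩
      simp only [Set.mem_iInter, Set.mem_inter_iff, Set.mem_compl_iff] at hx
      have hxK : x ∈ ⋂ i, B i := Set.mem_iInter.mpr fun i => (hx i).1
      rw [← hK] at hxK
      exact (hx 0).2 (hKV hxK))
  set j := t.sup id with hj
  have hBV : B j ⊆ V := by
    intro x hx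
    by_contra hxV
    have hmem : x ∈ B 0 ∩ ⋂ i ∈ t, (B i ∩ Vᶜ) :=
      ⟨hmono 0 j (Nat.zero_le j) hx,
        Set.mem_iInter₂.mpr fun i hi =>
          ⟨hmono i j (Finset.le_sup (f := id) hi) hx, hxV⟩⟩
    rw [ht] at hmem
    exact hmem
  obtain ⟨e⟩ := hball j
  haveI hcball : ContractibleSpace ↥(Metric.closedBall (0 : EuclideanSpace ℝ (Fin (n+1))) 1) :=
    (convex_closedBall _ _).contractibleSpace ⟨0, Metric.mem_closedBall_self zero_le_one⟩
  haveI hcontr : ContractibleSpace ↥(B j) := e.contractibleSpace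
  have hmemB : ∀ x : ↥K, ((x : EuclideanSpace ℝ (Fin n)), (0 : ℝ)) ∈ B j := by
    intro x
    have hx : ((x : EuclideanSpace ℝ (Fin n)), (0 : ℝ)) ∈ K ×ˢ ({0} : Set ℝ) := ⟨x.2, rfl⟩
    rw [hK] at hx
    exact Set.mem_iInter.mp hx j
  let f : C(↥K, ↥(B j)) :=
    ⟨fun x => ⟨((x : EuclideanSpace ℝ (Fin n)), 0), hmemB x⟩, by
      apply Continuous.subtype_mk
      exact (continuous_subtype_val.prodMk continuous_const)⟩
  let g : C(↥(B j), ↥U) :=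
    ⟨fun p => ⟨(p : EuclideanSpace ℝ (Fin n) × ℝ).1, (hBV p.2).1⟩, by
      apply Continuous.subtype_mk
      exact continuous_fst.comp continuous_subtype_val⟩
  have hf : f.Nullhomotopic := by
    have hid := id_nullhomotopic ↥(B j)
    simpa using hid.comp_left f
  have hgf : (g.comp f).Nullhomotopic := hf.comp_right g
  obtain ⟨c, hc⟩ := hgf
  refine ⟨c, ?_⟩
  have heq : (⟨Set.inclusion hKU, continuous_inclusion hKU⟩ : C(↥K, ↥U)) = g.comp f := by
    ext x
    rfl
  rw [heq]
  exact hc
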